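/- Consider an abstract set W of weights in P = ℤ^{m+n} (weights of gl(m,n)) containing λ, contained in λ − Σ_i ℤ_{≥0} α_i, satisfying: for every positive odd root β and μ ∈ W, (β, μ) ≥ 0; and if (β, μ) ≠ 0 and μ + β ∉ W then μ − β ∈ W. Then for every j ≤ k with λ_k := ⟨h_k, λ⟩ > 0 (k ∈ {1,...,n−1}), the weight λ − β₀ − β₁ − ... − β_{j−1} lies in W, where β_i = α₀ + ... + α_i. -/

import Mathlib

/-- The symmetric bilinear form on the weight lattice of `gl(m,n)`, in
coordinates indexed by the letter codes `0, …, m+n-1`: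
`(ε_a, ε_a) = 1` for barred `a` (codes `< m`), `−1` for unbarred `a`. -/
def pform (m n : ℕ) (l μ : ℕ → ℤ) : ℤ :=
  ∑ x ∈ Finset.range m, l x * μ x - ∑ x ∈ Finset.range n, l (m + x) * μ (m + x)

lemma pform_single_aux (m n : ℕ) (hm : 0 < m) (i : ℕ) (hi : i < n) (μ : ℕ → ℤ) :
    pform m n (Pi.single (m-1) 1 - Pi.single (m+i) 1) μ = μ (m-1) + μ (m+i) := by
  unfold pform
  have h1 : ∑ x ∈ Finset.range m, (Pi.single (m-1) 1 - Pi.single (m+i) 1 : ℕ → ℤ) x * μ x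
      = μ (m-1) := by
    rw [Finset.sum_eq_single (m-1)]
    · simp only [Pi.sub_apply, Pi.single_apply]
      rw [if_pos trivial, if_neg (by omega : ¬ (m - 1 = m + i))]; ring
    · intro b hb hne
      simp only [Finset.mem_range] at hb
      simp only [Pi.sub_apply, Pi.single_apply]
      rw [if_neg hne, if_neg (by omega : ¬ (b = m + i))]; ring
    · intro h
      simp [Finset.mem_range] at h
      omega
  have h2 : ∑ x ∈ Finset.range n, (Pi.single (m-1) 1 - Pi.single (m+i) 1 : ℕ → ℤ) (m + x) * μ (m + x)
      = -μ (m+i) := by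
    rw [Finset.sum_eq_single i]
    · simp only [Pi.sub_apply, Pi.single_apply]
      rw [if_pos trivial, if_neg (by omega : ¬ (m + i = m - 1))]; ring
    · intro b hb hne
      simp only [Finset.mem_range] at hb
      simp only [Pi.sub_apply, Pi.single_apply]
      rw [if_neg (by omega : ¬ (m + b = m - 1)), if_neg (by omega : ¬ (m + b = m + i))]; ring
    · intro h
      simp [Finset.mem_range] at h
      omega
  rw [h1, h2]; ring

lemma closure_coeff (m n c : ℕ) (x : ℕ → ℤ)
    (hx : x ∈ AddSubmonoid.closure {x : ℕ → ℤ | ∃ c, c + 1 < m + n ∧ x = Pi.single c 1 - Pi.single (c + 1) 1}) :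
    0 ≤ ∑ t ∈ Finset.range c, x t := by
  induction hx using AddSubmonoid.closure_induction with
  | mem x hx =>
    obtain ⟨d, hd, rfl⟩ := hx
    simp only [Pi.sub_apply]
    rw [Finset.sum_sub_distrib, Finset.sum_pi_single', Finset.sum_pi_single']
    split_ifs <;> simp_all [Finset.mem_range] <;> omega
  | zero => simp
  | add x y _ _ hx hy =>
    simp only [Pi.add_apply]
    rw [Finset.sum_add_distrib]
    omega

lemma sumB_bar (m j : ℕ) (hm : 0 < m) :
    (∑ i ∈ Finset.range j, (Pi.single (m-1) 1 - Pi.single (m+i) 1 : ℕ → ℤ)) (m-1) = j := by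
  rw [Finset.sum_apply]
  have h : ∀ i ∈ Finset.range j, (Pi.single (m-1) 1 - Pi.single (m+i) 1 : ℕ → ℤ) (m-1) = 1 := by
    intro i _
    simp only [Pi.sub_apply, Pi.single_apply]
    rw [if_neg (by omega : ¬ (m-1 = m+i))]
    simp
  rw [Finset.sum_congr rfl h, Finset.sum_const]
  simp

lemma sumB_unbar (m j a : ℕ) (hm : 0 < m) :
    (∑ i ∈ Finset.range j, (Pi.single (m-1) 1 - Pi.single (m+i) 1 : ℕ → ℤ)) (m+a)
      = -(if a < j then 1 else 0) := by
  rw [Finset.sum_apply]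
  have h : ∀ i ∈ Finset.range j, (Pi.single (m-1) 1 - Pi.single (m+i) 1 : ℕ → ℤ) (m+a)
      = -(if i = a then 1 else 0) := by
    intro i _
    simp only [Pi.sub_apply, Pi.single_apply]
    rw [if_neg (by omega : ¬ (m+a = m-1))]
    by_cases hia : i = a
    · subst hia; simp
    · rw [if_neg (by omega : ¬ (m+a = m+i)), if_neg hia]; ring
  rw [Finset.sum_congr rfl h, Finset.sum_neg_distrib, Finset.sum_ite_eq']
  simp [Finset.mem_range]

lemma sumB_range (m j c : ℕ) :
    ∑ t ∈ Finset.range c, (∑ i ∈ Finset.range j, (Pi.single (m-1) 1 - Pi.single (m+i) 1 : ℕ → ℤ)) t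
      = ∑ i ∈ Finset.range j, ((if m-1 ∈ Finset.range c then (1:ℤ) else 0) - (if m+i ∈ Finset.range c then 1 else 0)) := by
  simp only [Finset.sum_apply]
  rw [Finset.sum_comm]
  refine Finset.sum_congr rfl fun i _ => ?_
  simp only [Pi.sub_apply]
  rw [Finset.sum_sub_distrib, Finset.sum_pi_single', Finset.sum_pi_single']

/-- The inductive claim in the proof of Proposition 3.5 of
Benkart–Kang–Kashiwara.  Let `W` be a set of weights containing `λ`, contained
in `λ − Σ ℤ_{≥0} α_i`, such that `(β, μ) ≥ 0` for every positive odd root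
`β = ε_ā − ε_b` and every `μ ∈ W`, and with `(β, μ) ≠ 0` and `μ + β ∉ W`
implying `μ − β ∈ W`.  If `λ_k = ⟨h_k,λ⟩ > 0` for some `k ∈ {1,…,n−1}`, then
for every `j ≤ k` the weight `λ − β₀ − β₁ − ⋯ − β_{j−1}` lies in `W`, where
`β_i = α₀ + ⋯ + α_i = ε_{1̄} − ε_{i+1}`. -/
theorem weight_chain_mem (m n : ℕ) (hm : 0 < m) (hn : 0 < n)
    (lam : ℕ → ℤ) (W : Set (ℕ → ℤ)) (hlamW : lam ∈ W)
    (hQ : ∀ μ ∈ W, lam - μ ∈ AddSubmonoid.closure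
        {x : ℕ → ℤ | ∃ c, c + 1 < m + n ∧ x = Pi.single c 1 - Pi.single (c + 1) 1})
    (hpos : ∀ μ ∈ W, ∀ a < m, ∀ b < n,
      0 ≤ pform m n (Pi.single a 1 - Pi.single (m + b) 1) μ)
    (him : ∀ μ ∈ W, ∀ a < m, ∀ b < n,
      pform m n (Pi.single a 1 - Pi.single (m + b) 1) μ ≠ 0 →
      μ + (Pi.single a 1 - Pi.single (m + b) 1) ∉ W →
      μ - (Pi.single a 1 - Pi.single (m + b) 1) ∈ W) :
    ∀ k, 1 ≤ k → k ≤ n - 1 → 0 < lam (m + k - 1) - lam (m + k) →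
      ∀ j ≤ k,
        lam - ∑ i ∈ Finset.range j,
            (Pi.single (m - 1) (1 : ℤ) - Pi.single (m + i) 1) ∈ W := by
  intro k hk1 hk2 hlk j hjk
  have hidx : m + k - 1 = m + (k - 1) := by omega
  rw [hidx] at hlk
  induction j with
  | zero => simpa using hlamW
  | succ j IH =>
    have hjk' : j < k := hjk
    have hmuW := IH (Nat.le_of_lt hjk')
    have hjn : j < n := by omega
    have hkn : k < n := by omega
    have hk1n : k - 1 < n := by omega
    have hmm : m - 1 < m := by omega
    -- pairing values against μ_j = lam - S
    have hpair : ∀ a, a < n →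
        pform m n (Pi.single (m-1) 1 - Pi.single (m+a) 1)
          (lam - ∑ i ∈ Finset.range j, (Pi.single (m - 1) (1 : ℤ) - Pi.single (m + i) 1))
        = lam (m-1) + lam (m+a) - j + (if a < j then 1 else 0) := by
      intro a ha
      rw [pform_single_aux m n hm a ha]
      simp only [Pi.sub_apply]
      rw [sumB_bar m j hm, sumB_unbar m j a hm]
      split_ifs <;> ring
    -- μ_j + β_a ∉ W for a ≥ j
    have hnotW : ∀ a, j ≤ a →
        (lam - ∑ i ∈ Finset.range j, (Pi.single (m - 1) (1 : ℤ) - Pi.single (m + i) 1))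
          + (Pi.single (m-1) 1 - Pi.single (m+a) 1) ∉ W := by
      intro a hja hmem
      have h := closure_coeff m n (m+a) _ (hQ _ hmem)
      have he : lam - ((lam - ∑ i ∈ Finset.range j, (Pi.single (m - 1) (1 : ℤ) - Pi.single (m + i) 1))
            + (Pi.single (m-1) 1 - Pi.single (m+a) 1))
          = (∑ i ∈ Finset.range j, (Pi.single (m - 1) (1 : ℤ) - Pi.single (m + i) 1))
            - (Pi.single (m-1) 1 - Pi.single (m+a) 1) := by abel
      rw [he] at h
      simp only [Pi.sub_apply] at h
      rw [Finset.sum_sub_distrib] at h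
      have h1 : ∑ t ∈ Finset.range (m+a),
          ((∑ i ∈ Finset.range j, (Pi.single (m - 1) (1 : ℤ) - Pi.single (m + i) 1) : ℕ → ℤ)) t = 0 := by
        rw [sumB_range]
        refine Finset.sum_eq_zero fun i hi => ?_
        simp only [Finset.mem_range] at hi
        rw [if_pos (by simp only [Finset.mem_range]; omega),
          if_pos (by simp only [Finset.mem_range]; omega)]
        ring
      have h2 : ∑ t ∈ Finset.range (m+a),
          ((Pi.single (m-1) 1 : ℕ → ℤ) t - (Pi.single (m+a) 1 : ℕ → ℤ) t) = 1 := by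
        rw [Finset.sum_sub_distrib, Finset.sum_pi_single', Finset.sum_pi_single']
        rw [if_pos (by simp only [Finset.mem_range]; omega),
          if_neg (by simp only [Finset.mem_range]; omega)]
        ring
      rw [h1, h2] at h
      omega
    -- the pairing with β_j is nonzero
    have hposj := hpos _ hmuW (m-1) hmm k hkn
    rw [hpair k hkn, if_neg (by omega : ¬ k < j)] at hposj
    have hne : pform m n (Pi.single (m-1) 1 - Pi.single (m+j) 1)
        (lam - ∑ i ∈ Finset.range j, (Pi.single (m - 1) (1 : ℤ) - Pi.single (m + i) 1)) ≠ 0 := by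
      rw [hpair j hjn, if_neg (by omega : ¬ j < j)]
      rcases eq_or_lt_of_le (by omega : j ≤ k - 1) with he | hlt
      · rw [show m + j = m + (k-1) by omega]
        omega
      · intro h0
        have hBne : pform m n (Pi.single (m-1) 1 - Pi.single (m+(k-1)) 1)
            (lam - ∑ i ∈ Finset.range j, (Pi.single (m - 1) (1 : ℤ) - Pi.single (m + i) 1)) ≠ 0 := by
          rw [hpair (k-1) hk1n, if_neg (by omega : ¬ k - 1 < j)]
          omega
        have hν := him _ hmuW (m-1) hmm (k-1) hk1n hBne (hnotW (k-1) (by omega))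
        have hposν := hpos _ hν (m-1) hmm j hjn
        rw [pform_single_aux m n hm j hjn] at hposν
        have f1 : (Pi.single (m-1) 1 : ℕ → ℤ) (m-1) = 1 := by simp
        have f2 : (Pi.single (m+(k-1)) 1 : ℕ → ℤ) (m-1) = 0 := Pi.single_eq_of_ne (by omega) _
        have f3 : (Pi.single (m-1) 1 : ℕ → ℤ) (m+j) = 0 := Pi.single_eq_of_ne (by omega) _
        have f4 : (Pi.single (m+(k-1)) 1 : ℕ → ℤ) (m+j) = 0 := Pi.single_eq_of_ne (by omega) _
        simp only [Pi.sub_apply] at hposν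
        rw [f1, f2, f3, f4] at hposν
        rw [sumB_bar m j hm, sumB_unbar m j j hm, if_neg (by omega : ¬ j < j)] at hposν
        omega
    rw [Finset.sum_range_succ, sub_add_eq_sub_sub]
    exact him _ hmuW (m-1) hmm j hjn hne (hnotW j le_rfl)
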